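/- Let p > 1. There exist constants c, C > 0 depending only on p such that for all δ ≥ 0, all d ≥ 1 and all real d×d matrices P, Q: c·(δ+|P^sym|+|Q^sym|)^{p−2}·|P^sym−Q^sym|² ≤ (S(P)−S(Q)):(P−Q) ≤ C·(δ+|P^sym|+|Q^sym|)^{p−2}·|P^sym−Q^sym|². -/
import Mathlib


open Matrix

/-- Symmetric part `P^sym = (P + Pᵀ)/2` of a square matrix. -/
noncomputable def msym {d : ℕ} (P : Matrix (Fin d) (Fin d) ℝ) : Matrix (Fin d) (Fin d) ℝ :=
  (2⁻¹ : ℝ) • (P + Pᵀ)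

/-- Frobenius inner product `A:B = ∑ᵢⱼ Aᵢⱼ Bᵢⱼ`. -/
noncomputable def mdot {d : ℕ} (A B : Matrix (Fin d) (Fin d) ℝ) : ℝ :=
  ∑ i, ∑ j, A i j * B i j

/-- Frobenius norm `|A| = (A:A)^(1/2)`. -/
noncomputable def mnorm {d : ℕ} (A : Matrix (Fin d) (Fin d) ℝ) : ℝ :=
  Real.sqrt (mdot A A)

/-- Stress tensor `S(P) = (δ + |P^sym|)^(p-2) • P^sym` (real power, `0^r = 0` for `r < 0`). -/
noncomputable def Smap (p δ : ℝ) {d : ℕ} (P : Matrix (Fin d) (Fin d) ℝ) :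
    Matrix (Fin d) (Fin d) ℝ :=
  ((δ + mnorm (msym P)) ^ (p - 2)) • msym P

/-- Associated function `F(P) = (δ + |P^sym|)^((p-2)/2) • P^sym`. -/
noncomputable def Fmap (p δ : ℝ) {d : ℕ} (P : Matrix (Fin d) (Fin d) ℝ) :
    Matrix (Fin d) (Fin d) ℝ :=
  ((δ + mnorm (msym P)) ^ ((p - 2) / 2)) • msym P


private lemma amgm2 (t x y : ℝ) (ht0 : 0 ≤ t) (ht1 : t ≤ 1) (hx : 0 ≤ x) (hy : 0 ≤ y) :
    x ^ t * y ^ (1 - t) ≤ t * x + (1 - t) * y :=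
  Real.geom_mean_le_arith_mean2_weighted ht0 (by linarith) hx hy (by ring)

/-- concave Bernoulli: for `0 ≤ s ≤ 1`, `0 < y ≤ x`, `x^s ≤ y^s + s y^(s-1) (x-y)`. -/
private lemma bern_concave (s x y : ℝ) (hs0 : 0 ≤ s) (hs1 : s ≤ 1) (hy : 0 < y) (hxy : y ≤ x) :
    x ^ s ≤ y ^ s + s * y ^ (s - 1) * (x - y) := by
  have hx : 0 ≤ x := le_trans hy.le hxy
  have h := amgm2 s x y hs0 hs1 hx hy.le
  have h3 : y ^ (1 - s) * y ^ (s - 1) = 1 := by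
    rw [← Real.rpow_add hy]; norm_num
  have hys : y ^ s = y ^ (s - 1) * y := by
    rw [← Real.rpow_add_one hy.ne']; ring_nf
  have h2 : x ^ s * (y ^ (1 - s) * y ^ (s - 1)) ≤ (s * x + (1 - s) * y) * y ^ (s - 1) := by
    have := mul_le_mul_of_nonneg_right h (Real.rpow_nonneg hy.le (s - 1))
    linarith [this, mul_assoc (x ^ s) (y ^ (1 - s)) (y ^ (s - 1))]
  rw [h3, mul_one] at h2
  nlinarith [h2, hys]

/-- convex Bernoulli: for `1 ≤ s`, `0 ≤ y ≤ x`, `0 < x`: `x^s ≤ y^s + s x^(s-1) (x-y)`. -/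
private lemma bern_convex (s x y : ℝ) (hs : 1 ≤ s) (hy : 0 ≤ y) (hx : 0 < x) (hxy : y ≤ x) :
    x ^ s ≤ y ^ s + s * x ^ (s - 1) * (x - y) := by
  have hs0 : (0:ℝ) < s := by linarith
  have h := amgm2 (1 / s) (y ^ s) (x ^ s) (by positivity) (by rw [div_le_one hs0]; linarith)
    (Real.rpow_nonneg hy s) (Real.rpow_nonneg hx.le s)
  have e1 : (y ^ s) ^ (1 / s) = y := by
    rw [← Real.rpow_mul hy]
    rw [mul_one_div, div_self hs0.ne', Real.rpow_one]
  have e2 : (x ^ s) ^ (1 - 1 / s) = x ^ (s - 1) := by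
    rw [← Real.rpow_mul hx.le]
    congr 1
    field_simp
  rw [e1, e2] at h
  -- h : y * x^(s-1) ≤ (1/s) * y^s + (1 - 1/s) * x^s
  have hxs : x ^ s = x ^ (s - 1) * x := by
    rw [← Real.rpow_add_one hx.ne']; ring_nf
  have h2 : s * (y * x ^ (s - 1)) ≤ y ^ s + (s - 1) * x ^ s := by
    have := mul_le_mul_of_nonneg_left h (le_of_lt hs0)
    have e3 : s * (1 / s * y ^ s + (1 - 1 / s) * x ^ s) = y ^ s + (s - 1) * x ^ s := by
      field_simp
    linarith [this, e3.le, e3.ge]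
  nlinarith [h2, hxs]

private lemma c0_facts (p : ℝ) (hp : 1 < p) :
    0 < min (p-1) 1 * (2:ℝ)^(1-p)/2 ∧
    min (p-1) 1 * (2:ℝ)^(1-p)/2 * (2:ℝ)^(p-2) ≤ 1 ∧
    min (p-1) 1 * (2:ℝ)^(1-p)/2 * (2:ℝ)^(p-1) ≤ 1 ∧
    min (p-1) 1 * (2:ℝ)^(1-p)/2 ≤ p - 1 ∧
    min (p-1) 1 * (2:ℝ)^(1-p)/2 ≤ 1/2 := by
  have hm0 : 0 < min (p-1) 1 := lt_min (by linarith) one_pos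
  have hm1 : min (p-1) 1 ≤ 1 := min_le_right _ _
  have hmp : min (p-1) 1 ≤ p - 1 := min_le_left _ _
  have hr0 : (0:ℝ) < (2:ℝ)^(1-p) := Real.rpow_pos_of_pos (by norm_num) _
  have hr1 : (2:ℝ)^(1-p) ≤ 1 := Real.rpow_le_one_of_one_le_of_nonpos one_le_two (by linarith)
  have h2p : (2:ℝ)^(1-p) * (2:ℝ)^(p-1) = 1 := by
    rw [← Real.rpow_add (by norm_num : (0:ℝ) < 2)]; norm_num
  have hr2 : (0:ℝ) < (2:ℝ)^(p-1) := Real.rpow_pos_of_pos (by norm_num) _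
  have hf2 : min (p-1) 1 * (2:ℝ)^(1-p)/2 * (2:ℝ)^(p-1) ≤ 1 := by
    calc min (p-1) 1 * (2:ℝ)^(1-p)/2 * (2:ℝ)^(p-1)
        = min (p-1) 1 * ((2:ℝ)^(1-p) * (2:ℝ)^(p-1)) / 2 := by ring
      _ = min (p-1) 1 / 2 := by rw [h2p, mul_one]
      _ ≤ 1 := by linarith
  refine ⟨by positivity, ?_, hf2, ?_, ?_⟩
  · have h12 : (2:ℝ)^(p-2) ≤ (2:ℝ)^(p-1) :=
      Real.rpow_le_rpow_of_exponent_le one_le_two (by linarith)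
    have hc0 : 0 ≤ min (p-1) 1 * (2:ℝ)^(1-p)/2 := by positivity
    calc min (p-1) 1 * (2:ℝ)^(1-p)/2 * (2:ℝ)^(p-2)
        ≤ min (p-1) 1 * (2:ℝ)^(1-p)/2 * (2:ℝ)^(p-1) := by
          exact mul_le_mul_of_nonneg_left h12 hc0
      _ ≤ 1 := hf2
  · nlinarith
  · nlinarith
/-- key lemma for the lower bound in the degenerate case `p < 2`:
`(δ+b)^(p-2) * b ≤ (δ+a)^(p-2) * ((2-p)*a + (p-1)*b)`. -/
private lemma key_low (p δ a b : ℝ) (hp : 1 < p) (hp2 : p < 2) (hδ : 0 ≤ δ) (hb : 0 ≤ b)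
    (hab : b ≤ a) (hx : 0 < δ + a) :
    (δ+b)^(p-2) * b ≤ (δ+a)^(p-2) * ((2-p)*a + (p-1)*b) := by
  have ha : 0 ≤ a := hb.trans hab
  have hMnn : 0 ≤ (2-p)*a + (p-1)*b := by nlinarith
  rcases eq_or_lt_of_le (by linarith : (0:ℝ) ≤ δ + b) with h0 | hy
  · -- δ + b = 0 : LHS is `0^(p-2) * b` with `b = 0`
    have hb0 : b = 0 := by linarith
    rw [hb0, mul_zero]
    exact mul_nonneg (Real.rpow_nonneg hx.le _) (by nlinarith : (0:ℝ) ≤ (2-p)*a + (p-1)*0)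
  · -- main case, via weighted AM-GM
    have ht0 : 0 < 2 - p := by linarith
    have ht1 : 2 - p < 1 := by linarith
    have hmain : b * (δ+a)^(2-p) ≤ ((2-p)*a + (p-1)*b) * (δ+b)^(2-p) := by
      have h := amgm2 (2-p) (δ+a) (δ+b) ht0.le ht1.le hx.le hy.le
      have h2 : b * ((δ+a)^(2-p) * (δ+b)^(1-(2-p))) ≤ ((2-p)*a + (p-1)*b) * (δ+b) := by
        have hb' := mul_le_mul_of_nonneg_left h hb
        nlinarith [hb', mul_nonneg (mul_nonneg hδ ht0.le) (sub_nonneg.2 hab)]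
      have h3 : (δ+b)^(2-p) * (δ+b)^(1-(2-p)) = δ + b := by
        rw [← Real.rpow_add hy]; norm_num
      have h4 : b * (δ+a)^(2-p) * (δ+b)^(1-(2-p)) ≤ ((2-p)*a + (p-1)*b) * (δ+b)^(2-p) * (δ+b)^(1-(2-p)) := by
        calc b * (δ+a)^(2-p) * (δ+b)^(1-(2-p)) = b * ((δ+a)^(2-p) * (δ+b)^(1-(2-p))) := by ring
          _ ≤ ((2-p)*a + (p-1)*b) * (δ+b) := h2
          _ = ((2-p)*a + (p-1)*b) * ((δ+b)^(2-p) * (δ+b)^(1-(2-p))) := by rw [h3]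
          _ = ((2-p)*a + (p-1)*b) * (δ+b)^(2-p) * (δ+b)^(1-(2-p)) := by ring
      exact le_of_mul_le_mul_right h4 (Real.rpow_pos_of_pos hy _)
    have hxt := Real.rpow_pos_of_pos hx (2-p)
    have hyt := Real.rpow_pos_of_pos hy (2-p)
    have e1 : (δ+a)^(p-2) = ((δ+a)^(2-p))⁻¹ := by
      rw [show p - 2 = -(2-p) by ring, Real.rpow_neg hx.le]
    have e2 : (δ+b)^(p-2) = ((δ+b)^(2-p))⁻¹ := by
      rw [show p - 2 = -(2-p) by ring, Real.rpow_neg hy.le]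
    rw [e1, e2, inv_mul_eq_div, inv_mul_eq_div, div_le_div_iff₀ hyt hxt]
    linarith [hmain]
private lemma half_bound (p z w : ℝ) (hp : 1 < p) (hp2 : p < 2) (hz : 0 ≤ z) (hw : 0 < w)
    (h : w ≤ 2*z) (hzw : z ≤ w) : z^(p-2) ≤ 2 * w^(p-2) := by
  have hz0 : 0 < z := by linarith
  have h3 : (2*z)^(p-2) ≤ w^(p-2) :=
    Real.rpow_le_rpow_of_nonpos hw h (by linarith)
  rw [Real.mul_rpow (by norm_num) hz] at h3
  have h4 : (1/2 : ℝ) ≤ (2:ℝ)^(p-2) := by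
    have h5 : (2:ℝ)^(-1:ℝ) ≤ (2:ℝ)^(p-2) :=
      Real.rpow_le_rpow_of_exponent_le one_le_two (by linarith)
    have e : (2:ℝ)^(-1:ℝ) = 1/2 := by
      rw [Real.rpow_neg (by norm_num), Real.rpow_one]
      norm_num
    rw [← e]
    exact h5
  nlinarith [Real.rpow_nonneg hz (p-2), h3, h4]

private lemma par_low (p δ a b : ℝ) (hp : 1 < p) (hδ : 0 ≤ δ) (hb : 0 ≤ b) (hab : b ≤ a) :
    min (p-1) 1 * (2:ℝ)^(1-p)/2 * ((δ+a+b)^(p-2) * (a-b)) ≤ (δ+a)^(p-2)*a - (δ+b)^(p-2)*b := by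
  obtain ⟨hc0, hf1, hf2, hf3, hf4⟩ := c0_facts p hp
  have ha : 0 ≤ a := hb.trans hab
  have hX0 : 0 ≤ δ+a+b := by linarith
  have hx0 : 0 ≤ δ+a := by linarith
  have hy0 : 0 ≤ δ+b := by linarith
  have hXs : 0 ≤ (δ+a+b)^(p-2) := Real.rpow_nonneg hX0 _
  have hxs : 0 ≤ (δ+a)^(p-2) := Real.rpow_nonneg hx0 _
  rcases eq_or_lt_of_le hx0 with h0 | hx
  · have hb0 : b = 0 := by linarith
    have ha0 : a = 0 := by linarith
    rw [ha0, hb0]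
    norm_num
  rcases le_or_gt 2 p with hp2 | hp2
  · have hs : (0:ℝ) ≤ p-2 := by linarith
    have h1 : (δ+b)^(p-2) ≤ (δ+a)^(p-2) := Real.rpow_le_rpow hy0 (by linarith) hs
    have h2 : (δ+a+b)^(p-2) ≤ (2:ℝ)^(p-2) * (δ+a)^(p-2) := by
      rw [← Real.mul_rpow (by norm_num) hx0]
      exact Real.rpow_le_rpow hX0 (by linarith) hs
    have h3 : min (p-1) 1 * (2:ℝ)^(1-p)/2 * ((δ+a+b)^(p-2) * (a-b))
        ≤ (min (p-1) 1 * (2:ℝ)^(1-p)/2 * (2:ℝ)^(p-2)) * ((δ+a)^(p-2) * (a-b)) := by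
      have h2' := mul_le_mul_of_nonneg_right h2 (sub_nonneg.2 hab)
      nlinarith [h2', hc0]
    have h4 : (min (p-1) 1 * (2:ℝ)^(1-p)/2 * (2:ℝ)^(p-2)) * ((δ+a)^(p-2) * (a-b))
        ≤ 1 * ((δ+a)^(p-2) * (a-b)) :=
      mul_le_mul_of_nonneg_right hf1 (mul_nonneg hxs (by linarith))
    have h5 : (δ+b)^(p-2) * b ≤ (δ+a)^(p-2) * b := mul_le_mul_of_nonneg_right h1 hb
    nlinarith [h3, h4, h5]
  · have hkey := key_low p δ a b hp hp2 hδ hb hab hx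
    have hXx : (δ+a+b)^(p-2) ≤ (δ+a)^(p-2) :=
      Real.rpow_le_rpow_of_nonpos hx (by linarith) (by linarith)
    have h6 : (p-1) * ((δ+a+b)^(p-2) * (a-b)) ≤ (p-1) * ((δ+a)^(p-2) * (a-b)) := by
      have := mul_le_mul_of_nonneg_right hXx (sub_nonneg.2 hab)
      nlinarith [this]
    have h7 : min (p-1) 1 * (2:ℝ)^(1-p)/2 * ((δ+a+b)^(p-2)*(a-b))
        ≤ (p-1) * ((δ+a+b)^(p-2)*(a-b)) :=
      mul_le_mul_of_nonneg_right hf3 (mul_nonneg hXs (by linarith))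
    nlinarith [h6, h7, hkey]

private lemma anti_low (p δ a b : ℝ) (hp : 1 < p) (hδ : 0 ≤ δ) (hb : 0 ≤ b) (hab : b ≤ a) :
    min (p-1) 1 * (2:ℝ)^(1-p)/2 * ((δ+a+b)^(p-2) * (a+b)) ≤ (δ+a)^(p-2)*a + (δ+b)^(p-2)*b := by
  obtain ⟨hc0, hf1, hf2, hf3, hf4⟩ := c0_facts p hp
  have ha : 0 ≤ a := hb.trans hab
  have hX0 : 0 ≤ δ+a+b := by linarith
  have hx0 : 0 ≤ δ+a := by linarith
  have hy0 : 0 ≤ δ+b := by linarith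
  have hXs : 0 ≤ (δ+a+b)^(p-2) := Real.rpow_nonneg hX0 _
  have hxs : 0 ≤ (δ+a)^(p-2) := Real.rpow_nonneg hx0 _
  have hyb : 0 ≤ (δ+b)^(p-2) * b := mul_nonneg (Real.rpow_nonneg hy0 _) hb
  rcases eq_or_lt_of_le hx0 with h0 | hx
  · have hb0 : b = 0 := by linarith
    have ha0 : a = 0 := by linarith
    rw [ha0, hb0]
    norm_num
  rcases le_or_gt 2 p with hp2 | hp2
  · have hs : (0:ℝ) ≤ p-2 := by linarith
    have h2 : (δ+a+b)^(p-2) ≤ (2:ℝ)^(p-2) * (δ+a)^(p-2) := by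
      rw [← Real.mul_rpow (by norm_num) hx0]
      exact Real.rpow_le_rpow hX0 (by linarith) hs
    have h2e : (2:ℝ)^(p-1) = (2:ℝ)^(p-2)*2 := by
      rw [show p-1 = (p-2)+1 by ring, Real.rpow_add_one (by norm_num : (2:ℝ) ≠ 0)]
    -- c0 * (X^s*(a+b)) ≤ c0*2^(p-2)*(x^s*(a+b)) ≤ c0*2^(p-2)*(x^s*2a) = (c0*2^(p-1))*(x^s*a) ≤ x^s*a
    have h3 : min (p-1) 1 * (2:ℝ)^(1-p)/2 * ((δ+a+b)^(p-2) * (a+b))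
        ≤ (min (p-1) 1 * (2:ℝ)^(1-p)/2 * (2:ℝ)^(p-2)) * ((δ+a)^(p-2) * (a+b)) := by
      have h2' := mul_le_mul_of_nonneg_right h2 (by linarith : (0:ℝ) ≤ a+b)
      nlinarith [h2', hc0]
    have h4 : (min (p-1) 1 * (2:ℝ)^(1-p)/2 * (2:ℝ)^(p-2)) * ((δ+a)^(p-2) * (a+b))
        ≤ (min (p-1) 1 * (2:ℝ)^(1-p)/2 * (2:ℝ)^(p-2)) * ((δ+a)^(p-2) * (2*a)) := by
      apply mul_le_mul_of_nonneg_left _ (by positivity)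
      exact mul_le_mul_of_nonneg_left (by linarith) hxs
    have h5 : (min (p-1) 1 * (2:ℝ)^(1-p)/2 * (2:ℝ)^(p-2)) * ((δ+a)^(p-2) * (2*a))
        ≤ 1 * ((δ+a)^(p-2) * a) := by
      have : (min (p-1) 1 * (2:ℝ)^(1-p)/2 * (2:ℝ)^(p-2)) * ((δ+a)^(p-2) * (2*a))
          = (min (p-1) 1 * (2:ℝ)^(1-p)/2 * (2:ℝ)^(p-1)) * ((δ+a)^(p-2) * a) := by
        rw [h2e]; ring
      rw [this]
      exact mul_le_mul_of_nonneg_right hf2 (mul_nonneg hxs ha)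
    nlinarith [h3, h4, h5, hyb]
  · have hXx : (δ+a+b)^(p-2) ≤ (δ+a)^(p-2) :=
      Real.rpow_le_rpow_of_nonpos hx (by linarith) (by linarith)
    have h6 : (δ+a+b)^(p-2)*(a+b) ≤ (δ+a)^(p-2)*(a+b) :=
      mul_le_mul_of_nonneg_right hXx (by linarith)
    have h7 : (δ+a)^(p-2)*(a+b) ≤ (δ+a)^(p-2)*(2*a) :=
      mul_le_mul_of_nonneg_left (by linarith) hxs
    have h8 : min (p-1) 1 * (2:ℝ)^(1-p)/2 * ((δ+a+b)^(p-2)*(a+b))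
        ≤ (1/2) * ((δ+a)^(p-2)*(2*a)) := by
      have hn : 0 ≤ (δ+a+b)^(p-2)*(a+b) := mul_nonneg hXs (by linarith)
      nlinarith [mul_le_mul_of_nonneg_right hf4 hn, hc0, h6, h7]
    nlinarith [h8, hyb]
private lemma par_up (p δ a b : ℝ) (hp : 1 < p) (hδ : 0 ≤ δ) (hb : 0 ≤ b) (hab : b ≤ a) :
    (δ+a)^(p-2)*a - (δ+b)^(p-2)*b ≤ (p+5) * ((δ+a+b)^(p-2) * (a-b)) := by
  have ha : 0 ≤ a := hb.trans hab
  have hX0 : 0 ≤ δ+a+b := by linarith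
  have hx0 : 0 ≤ δ+a := by linarith
  have hy0 : 0 ≤ δ+b := by linarith
  have hXs : 0 ≤ (δ+a+b)^(p-2) := Real.rpow_nonneg hX0 _
  have hxs : 0 ≤ (δ+a)^(p-2) := Real.rpow_nonneg hx0 _
  have hys : 0 ≤ (δ+b)^(p-2) := Real.rpow_nonneg hy0 _
  rcases eq_or_lt_of_le hx0 with h0 | hx
  · have hb0 : b = 0 := by linarith
    have ha0 : a = 0 := by linarith
    rw [ha0, hb0]
    norm_num
  rcases le_or_gt 2 p with hp2 | hp2
  · -- p ≥ 2
    have hs : (0:ℝ) ≤ p-2 := by linarith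
    have hxX : (δ+a)^(p-2) ≤ (δ+a+b)^(p-2) := Real.rpow_le_rpow hx0 (by linarith) hs
    have hB : ((δ+a)^(p-2) - (δ+b)^(p-2)) * b ≤ (p-2) * ((δ+a+b)^(p-2) * (a-b)) := by
      rcases le_or_gt p 3 with hp3 | hp3
      · -- 0 ≤ p-2 ≤ 1 : concave Bernoulli at δ+b
        rcases eq_or_lt_of_le hy0 with h0y | hy
        · have hb0 : b = 0 := by linarith
          rw [hb0, mul_zero]
          have hXs' : (0:ℝ) ≤ (δ+a+0)^(p-2) := Real.rpow_nonneg (by linarith) _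
          exact mul_nonneg (by linarith) (mul_nonneg hXs' (by linarith))
        · have hbc := bern_concave (p-2) (δ+a) (δ+b) hs (by linarith) hy (by linarith)
          have h1 : (δ+b)^(p-2-1) * b ≤ (δ+b)^(p-2) := by
            have e : (δ+b)^(p-2-1) * (δ+b) = (δ+b)^(p-2) := by
              rw [← Real.rpow_add_one hy.ne']
              ring_nf
            nlinarith [Real.rpow_nonneg hy0 (p-2-1)]
          have h2 : (δ+b)^(p-2) ≤ (δ+a+b)^(p-2) := Real.rpow_le_rpow hy0 (by linarith) hs
          have e1 : ((δ+a)^(p-2) - (δ+b)^(p-2)) * b ≤ ((p-2) * (δ+b)^(p-2-1) * (a-b)) * b := by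
            apply mul_le_mul_of_nonneg_right _ hb
            linarith [hbc]
          have e3 : (p-2)*(a-b) * ((δ+b)^(p-2-1)*b) ≤ (p-2)*(a-b) * (δ+b)^(p-2) :=
            mul_le_mul_of_nonneg_left h1 (by nlinarith : (0:ℝ) ≤ (p-2)*(a-b))
          have e4 : (p-2)*(a-b) * (δ+b)^(p-2) ≤ (p-2)*(a-b) * (δ+a+b)^(p-2) :=
            mul_le_mul_of_nonneg_left h2 (by nlinarith : (0:ℝ) ≤ (p-2)*(a-b))
          nlinarith [e1, e3, e4]
      · -- p ≥ 3 : convex Bernoulli at δ+a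
        have hbc := bern_convex (p-2) (δ+a) (δ+b) (by linarith) hy0 hx (by linarith)
        have h1 : (δ+a)^(p-2-1) * b ≤ (δ+a)^(p-2) := by
          have e : (δ+a)^(p-2-1) * (δ+a) = (δ+a)^(p-2) := by
            rw [← Real.rpow_add_one hx.ne']
            ring_nf
          nlinarith [Real.rpow_nonneg hx0 (p-2-1)]
        have e1 : ((δ+a)^(p-2) - (δ+b)^(p-2)) * b ≤ ((p-2) * (δ+a)^(p-2-1) * (a-b)) * b := by
          apply mul_le_mul_of_nonneg_right _ hb
          linarith [hbc]
        have e3 : (p-2)*(a-b) * ((δ+a)^(p-2-1)*b) ≤ (p-2)*(a-b) * (δ+a)^(p-2) :=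
          mul_le_mul_of_nonneg_left h1 (by nlinarith : (0:ℝ) ≤ (p-2)*(a-b))
        have e4 : (p-2)*(a-b) * (δ+a)^(p-2) ≤ (p-2)*(a-b) * (δ+a+b)^(p-2) :=
          mul_le_mul_of_nonneg_left hxX (by nlinarith : (0:ℝ) ≤ (p-2)*(a-b))
        nlinarith [e1, e3, e4]
    have hA : (δ+a)^(p-2)*(a-b) ≤ (δ+a+b)^(p-2)*(a-b) :=
      mul_le_mul_of_nonneg_right hxX (by linarith)
    nlinarith [hA, hB, mul_nonneg hXs (sub_nonneg.2 hab)]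
  · -- p < 2
    rcases eq_or_lt_of_le hy0 with h0y | hy
    · have hb0 : b = 0 := by linarith
      have hd0 : δ = 0 := by linarith
      rw [hb0, hd0]
      simp only [add_zero, zero_add, mul_zero, sub_zero]
      nlinarith [mul_nonneg (Real.rpow_nonneg ha (p-2)) ha]
    · have h1 : (δ+a)^(p-2) ≤ (δ+b)^(p-2) :=
        Real.rpow_le_rpow_of_nonpos hy (by linarith) (by linarith)
      have h2 : (δ+a)^(p-2) ≤ 2 * (δ+a+b)^(p-2) :=
        half_bound p (δ+a) (δ+a+b) hp hp2 hx0 (by linarith) (by linarith) (by linarith)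
      have h5 : (δ+a)^(p-2)*b ≤ (δ+b)^(p-2)*b := mul_le_mul_of_nonneg_right h1 hb
      have h6 : (δ+a)^(p-2)*(a-b) ≤ 2*((δ+a+b)^(p-2)*(a-b)) := by
        linarith [mul_le_mul_of_nonneg_right h2 (sub_nonneg.2 hab)]
      linarith [h5, h6, mul_nonneg (by linarith : (0:ℝ) ≤ p+3)
        (mul_nonneg hXs (sub_nonneg.2 hab))]

private lemma anti_up (p δ a b : ℝ) (hp : 1 < p) (hδ : 0 ≤ δ) (hb : 0 ≤ b) (hab : b ≤ a) :
    (δ+a)^(p-2)*a + (δ+b)^(p-2)*b ≤ (p+5) * ((δ+a+b)^(p-2) * (a+b)) := by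
  have ha : 0 ≤ a := hb.trans hab
  have hX0 : 0 ≤ δ+a+b := by linarith
  have hx0 : 0 ≤ δ+a := by linarith
  have hy0 : 0 ≤ δ+b := by linarith
  have hXs : 0 ≤ (δ+a+b)^(p-2) := Real.rpow_nonneg hX0 _
  have hxs : 0 ≤ (δ+a)^(p-2) := Real.rpow_nonneg hx0 _
  have hys : 0 ≤ (δ+b)^(p-2) := Real.rpow_nonneg hy0 _
  rcases eq_or_lt_of_le hx0 with h0 | hx
  · have hb0 : b = 0 := by linarith
    have ha0 : a = 0 := by linarith
    rw [ha0, hb0]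
    norm_num
  rcases le_or_gt 2 p with hp2 | hp2
  · have hs : (0:ℝ) ≤ p-2 := by linarith
    have hxX : (δ+a)^(p-2) ≤ (δ+a+b)^(p-2) := Real.rpow_le_rpow hx0 (by linarith) hs
    have hyX : (δ+b)^(p-2) ≤ (δ+a+b)^(p-2) := Real.rpow_le_rpow hy0 (by linarith) hs
    have e1 : (δ+a)^(p-2)*a ≤ (δ+a+b)^(p-2)*a := mul_le_mul_of_nonneg_right hxX ha
    have e2 : (δ+b)^(p-2)*b ≤ (δ+a+b)^(p-2)*b := mul_le_mul_of_nonneg_right hyX hb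
    nlinarith [e1, e2, mul_nonneg hXs (by linarith : (0:ℝ) ≤ a+b)]
  · have hX : 0 < δ+a+b := by linarith
    have h2 : (δ+a)^(p-2) ≤ 2 * (δ+a+b)^(p-2) :=
      half_bound p (δ+a) (δ+a+b) hp hp2 hx0 (by linarith) (by linarith) (by linarith)
    have ex : (δ+a)^(p-2)*a ≤ 2*((δ+a+b)^(p-2)*a) := by
      nlinarith [mul_le_mul_of_nonneg_right h2 ha]
    have ey : (δ+b)^(p-2)*b ≤ 2*((δ+a+b)^(p-2)*(a+b)) := by
      rcases le_or_gt (δ+a+b) (2*(δ+b)) with hc | hc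
      · have h3 : (δ+b)^(p-2) ≤ 2 * (δ+a+b)^(p-2) :=
          half_bound p (δ+b) (δ+a+b) hp hp2 hy0 hX hc (by linarith)
        nlinarith [mul_le_mul_of_nonneg_right h3 hb, mul_nonneg hXs ha]
      · rcases eq_or_lt_of_le hy0 with h0y | hy
        · have hb0 : b = 0 := by linarith
          rw [hb0, mul_zero]
          positivity
        · have e1 : (δ+b)^(p-2)*b ≤ (δ+b)^(p-2)*(δ+b) :=
            mul_le_mul_of_nonneg_left (by linarith) hys
          have e2 : (δ+b)^(p-2)*(δ+b) = (δ+b)^(p-1) := by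
            rw [show p-1 = (p-2)+1 by ring, Real.rpow_add_one hy.ne']
          have e3 : (δ+b)^(p-1) ≤ (δ+a+b)^(p-1) :=
            Real.rpow_le_rpow hy0 (by linarith) (by linarith)
          have e4 : (δ+a+b)^(p-1) = (δ+a+b)^(p-2)*(δ+a+b) := by
            rw [show p-1 = (p-2)+1 by ring, Real.rpow_add_one hX.ne']
          have e5 : (δ+a+b)^(p-2)*(δ+a+b) ≤ (δ+a+b)^(p-2)*(2*(a+b)) :=
            mul_le_mul_of_nonneg_left (by linarith) hXs
          nlinarith [e1, e3, e5, e2.le, e2.ge, e4.le, e4.ge]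
    nlinarith [ex, ey, mul_nonneg hXs hb, mul_nonneg hXs ha]
private lemma core_aux (p δ a b e : ℝ) (hp : 1 < p) (hδ : 0 ≤ δ) (hb : 0 ≤ b) (hab : b ≤ a)
    (he1 : e ≤ a*b) (he2 : -(a*b) ≤ e) :
    min (p-1) 1 * (2:ℝ)^(1-p)/2 * ((δ+a+b)^(p-2) * (a^2+b^2-2*e))
      ≤ (δ+a)^(p-2)*a^2 + (δ+b)^(p-2)*b^2 - ((δ+a)^(p-2)+(δ+b)^(p-2))*e ∧
    (δ+a)^(p-2)*a^2 + (δ+b)^(p-2)*b^2 - ((δ+a)^(p-2)+(δ+b)^(p-2))*e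
      ≤ (p+5) * ((δ+a+b)^(p-2) * (a^2+b^2-2*e)) := by
  obtain ⟨hc0, -, -, -, -⟩ := c0_facts p hp
  have ha : 0 ≤ a := hb.trans hab
  have hX0 : 0 ≤ δ+a+b := by linarith
  have hXs : 0 ≤ (δ+a+b)^(p-2) := Real.rpow_nonneg hX0 _
  -- endpoint inequalities e = a*b and e = -(a*b)
  have hP1 : min (p-1) 1 * (2:ℝ)^(1-p)/2 * ((δ+a+b)^(p-2) * (a^2+b^2-2*(a*b)))
      ≤ (δ+a)^(p-2)*a^2 + (δ+b)^(p-2)*b^2 - ((δ+a)^(p-2)+(δ+b)^(p-2))*(a*b) := by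
    have h := mul_le_mul_of_nonneg_right (par_low p δ a b hp hδ hb hab) (sub_nonneg.2 hab)
    nlinarith [h]
  have hP2 : min (p-1) 1 * (2:ℝ)^(1-p)/2 * ((δ+a+b)^(p-2) * (a^2+b^2-2*(-(a*b))))
      ≤ (δ+a)^(p-2)*a^2 + (δ+b)^(p-2)*b^2 - ((δ+a)^(p-2)+(δ+b)^(p-2))*(-(a*b)) := by
    have h := mul_le_mul_of_nonneg_right (anti_low p δ a b hp hδ hb hab)
      (by linarith : (0:ℝ) ≤ a+b)
    nlinarith [h]
  have hU1 : (δ+a)^(p-2)*a^2 + (δ+b)^(p-2)*b^2 - ((δ+a)^(p-2)+(δ+b)^(p-2))*(a*b)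
      ≤ (p+5) * ((δ+a+b)^(p-2) * (a^2+b^2-2*(a*b))) := by
    have h := mul_le_mul_of_nonneg_right (par_up p δ a b hp hδ hb hab) (sub_nonneg.2 hab)
    nlinarith [h]
  have hU2 : (δ+a)^(p-2)*a^2 + (δ+b)^(p-2)*b^2 - ((δ+a)^(p-2)+(δ+b)^(p-2))*(-(a*b))
      ≤ (p+5) * ((δ+a+b)^(p-2) * (a^2+b^2-2*(-(a*b)))) := by
    have h := mul_le_mul_of_nonneg_right (anti_up p δ a b hp hδ hb hab)
      (by linarith : (0:ℝ) ≤ a+b)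
    nlinarith [h]
  constructor
  · rcases le_total ((δ+a)^(p-2)+(δ+b)^(p-2)) (2*(min (p-1) 1 * (2:ℝ)^(1-p)/2 * ((δ+a+b)^(p-2))))
      with hσ | hσ
    · -- slope of the gap is nonneg : use endpoint e = -(a*b)
      linarith [hP2, mul_nonneg (by linarith :
        (0:ℝ) ≤ 2*(min (p-1) 1 * (2:ℝ)^(1-p)/2 * ((δ+a+b)^(p-2))) - ((δ+a)^(p-2)+(δ+b)^(p-2)))
        (by linarith : (0:ℝ) ≤ e + a*b)]
    · linarith [hP1, mul_nonneg (by linarith :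
        (0:ℝ) ≤ ((δ+a)^(p-2)+(δ+b)^(p-2)) - 2*(min (p-1) 1 * (2:ℝ)^(1-p)/2 * ((δ+a+b)^(p-2))))
        (by linarith : (0:ℝ) ≤ a*b - e)]
  · rcases le_total ((δ+a)^(p-2)+(δ+b)^(p-2)) (2*((p+5) * (δ+a+b)^(p-2))) with hσ | hσ
    · linarith [hU1, mul_nonneg (by linarith :
        (0:ℝ) ≤ 2*((p+5) * (δ+a+b)^(p-2)) - ((δ+a)^(p-2)+(δ+b)^(p-2)))
        (by linarith : (0:ℝ) ≤ a*b - e)]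
    · linarith [hU2, mul_nonneg (by linarith :
        (0:ℝ) ≤ ((δ+a)^(p-2)+(δ+b)^(p-2)) - 2*((p+5) * (δ+a+b)^(p-2)))
        (by linarith : (0:ℝ) ≤ e + a*b)]

private lemma core_scalar (p δ a b e : ℝ) (hp : 1 < p) (hδ : 0 ≤ δ) (ha : 0 ≤ a) (hb : 0 ≤ b)
    (he1 : e ≤ a*b) (he2 : -(a*b) ≤ e) :
    min (p-1) 1 * (2:ℝ)^(1-p)/2 * ((δ+a+b)^(p-2) * (a^2+b^2-2*e))
      ≤ (δ+a)^(p-2)*a^2 + (δ+b)^(p-2)*b^2 - ((δ+a)^(p-2)+(δ+b)^(p-2))*e ∧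
    (δ+a)^(p-2)*a^2 + (δ+b)^(p-2)*b^2 - ((δ+a)^(p-2)+(δ+b)^(p-2))*e
      ≤ (p+5) * ((δ+a+b)^(p-2) * (a^2+b^2-2*e)) := by
  rcases le_total b a with hab | hab
  · exact core_aux p δ a b e hp hδ hb hab he1 he2
  · obtain ⟨h1, h2⟩ := core_aux p δ b a e hp hδ ha hab (by linarith) (by linarith)
    rw [show δ+b+a = δ+a+b by ring] at h1 h2
    constructor
    · calc min (p-1) 1 * (2:ℝ)^(1-p)/2 * ((δ+a+b)^(p-2) * (a^2+b^2-2*e))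
          = min (p-1) 1 * (2:ℝ)^(1-p)/2 * ((δ+a+b)^(p-2) * (b^2+a^2-2*e)) := by ring
        _ ≤ (δ+b)^(p-2)*b^2 + (δ+a)^(p-2)*a^2 - ((δ+b)^(p-2)+(δ+a)^(p-2))*e := h1
        _ = (δ+a)^(p-2)*a^2 + (δ+b)^(p-2)*b^2 - ((δ+a)^(p-2)+(δ+b)^(p-2))*e := by ring
    · calc (δ+a)^(p-2)*a^2 + (δ+b)^(p-2)*b^2 - ((δ+a)^(p-2)+(δ+b)^(p-2))*e
          = (δ+b)^(p-2)*b^2 + (δ+a)^(p-2)*a^2 - ((δ+b)^(p-2)+(δ+a)^(p-2))*e := by ring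
        _ ≤ (p+5) * ((δ+a+b)^(p-2) * (b^2+a^2-2*e)) := h2
        _ = (p+5) * ((δ+a+b)^(p-2) * (a^2+b^2-2*e)) := by ring

private lemma mdot_comm {d : ℕ} (A B : Matrix (Fin d) (Fin d) ℝ) : mdot A B = mdot B A := by
  unfold mdot
  exact Finset.sum_congr rfl fun i _ => Finset.sum_congr rfl fun j _ => mul_comm _ _

private lemma mdot_self_nonneg {d : ℕ} (A : Matrix (Fin d) (Fin d) ℝ) : 0 ≤ mdot A A :=
  Finset.sum_nonneg fun i _ => Finset.sum_nonneg fun j _ => mul_self_nonneg _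

private lemma mnorm_nonneg' {d : ℕ} (A : Matrix (Fin d) (Fin d) ℝ) : 0 ≤ mnorm A :=
  Real.sqrt_nonneg _

private lemma mnorm_sq {d : ℕ} (A : Matrix (Fin d) (Fin d) ℝ) : mnorm A ^ 2 = mdot A A :=
  Real.sq_sqrt (mdot_self_nonneg A)

private lemma mdot_flat {d : ℕ} (M N : Matrix (Fin d) (Fin d) ℝ) :
    mdot M N = ∑ x : Fin d × Fin d, M x.1 x.2 * N x.1 x.2 := by
  unfold mdot
  exact (Fintype.sum_prod_type (f := fun x : Fin d × Fin d => M x.1 x.2 * N x.1 x.2)).symm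

private lemma mdot_cauchy {d : ℕ} (A B : Matrix (Fin d) (Fin d) ℝ) :
    |mdot A B| ≤ mnorm A * mnorm B := by
  have key : (mdot A B)^2 ≤ mdot A A * mdot B B := by
    rw [mdot_flat, mdot_flat, mdot_flat]
    have h := Finset.sum_mul_sq_le_sq_mul_sq Finset.univ
      (fun x : Fin d × Fin d => A x.1 x.2) (fun x : Fin d × Fin d => B x.1 x.2)
    simpa [sq] using h
  calc |mdot A B| = Real.sqrt ((mdot A B)^2) := (Real.sqrt_sq_eq_abs _).symm
    _ ≤ Real.sqrt (mdot A A * mdot B B) := Real.sqrt_le_sqrt key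
    _ = mnorm A * mnorm B := Real.sqrt_mul (mdot_self_nonneg A) _

private lemma mdot_lin {d : ℕ} (x y : ℝ) (A B : Matrix (Fin d) (Fin d) ℝ) :
    mdot (x • A - y • B) (A - B) = x * mdot A A + y * mdot B B - (x+y) * mdot A B := by
  unfold mdot
  simp only [Matrix.sub_apply, Matrix.smul_apply, smul_eq_mul, Finset.mul_sum,
    ← Finset.sum_add_distrib, ← Finset.sum_sub_distrib]
  exact Finset.sum_congr rfl fun i _ => Finset.sum_congr rfl fun j _ => by ring

private lemma mdot_sub_self {d : ℕ} (A B : Matrix (Fin d) (Fin d) ℝ) :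
    mdot (A - B) (A - B) = mdot A A + mdot B B - 2 * mdot A B := by
  unfold mdot
  simp only [Matrix.sub_apply, Finset.mul_sum,
    ← Finset.sum_add_distrib, ← Finset.sum_sub_distrib]
  exact Finset.sum_congr rfl fun i _ => Finset.sum_congr rfl fun j _ => by ring

private lemma mdot_transpose {d : ℕ} (M N : Matrix (Fin d) (Fin d) ℝ) :
    mdot M Nᵀ = mdot Mᵀ N := by
  unfold mdot
  simp only [Matrix.transpose_apply]
  exact Finset.sum_comm

private lemma mdot_add_right {d : ℕ} (M N K : Matrix (Fin d) (Fin d) ℝ) :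
    mdot M (N + K) = mdot M N + mdot M K := by
  unfold mdot
  simp only [Matrix.add_apply, mul_add, Finset.sum_add_distrib]

private lemma mdot_smul_right {d : ℕ} (r : ℝ) (M N : Matrix (Fin d) (Fin d) ℝ) :
    mdot M (r • N) = r * mdot M N := by
  unfold mdot
  simp only [Matrix.smul_apply, smul_eq_mul, Finset.mul_sum]
  exact Finset.sum_congr rfl fun i _ => Finset.sum_congr rfl fun j _ => by ring

private lemma msym_transpose {d : ℕ} (P : Matrix (Fin d) (Fin d) ℝ) : (msym P)ᵀ = msym P := by
  unfold msym
  rw [Matrix.transpose_smul, Matrix.transpose_add, Matrix.transpose_transpose, add_comm]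

private lemma msym_sub {d : ℕ} (P Q : Matrix (Fin d) (Fin d) ℝ) :
    msym (P - Q) = msym P - msym Q := by
  unfold msym
  rw [Matrix.transpose_sub, ← smul_sub]
  congr 1
  abel

private lemma mdot_msym_right {d : ℕ} (M N : Matrix (Fin d) (Fin d) ℝ) (hM : Mᵀ = M) :
    mdot M N = mdot M (msym N) := by
  unfold msym
  rw [mdot_smul_right, mdot_add_right, mdot_transpose, hM]
  ring

/-- There are constants `c, C > 0` depending only on `p > 1` such that for all `δ ≥ 0`,
all `d ≥ 1` and all real `d×d` matrices `P, Q`: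
`c * (δ + |P^sym| + |Q^sym|)^(p-2) * |P^sym - Q^sym|² ≤ (S(P) - S(Q)):(P - Q)
  ≤ C * (δ + |P^sym| + |Q^sym|)^(p-2) * |P^sym - Q^sym|²`. -/
theorem stmt7 (p : ℝ) (hp : 1 < p) :
    ∃ c : ℝ, 0 < c ∧ ∃ C : ℝ, 0 < C ∧
      ∀ δ : ℝ, 0 ≤ δ → ∀ d : ℕ, 1 ≤ d → ∀ P Q : Matrix (Fin d) (Fin d) ℝ,
        c * ((δ + mnorm (msym P) + mnorm (msym Q)) ^ (p - 2)
              * mnorm (msym P - msym Q) ^ 2)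
            ≤ mdot (Smap p δ P - Smap p δ Q) (P - Q) ∧
        mdot (Smap p δ P - Smap p δ Q) (P - Q)
            ≤ C * ((δ + mnorm (msym P) + mnorm (msym Q)) ^ (p - 2)
                    * mnorm (msym P - msym Q) ^ 2) := by
  refine ⟨min (p-1) 1 * (2:ℝ)^(1-p)/2, (c0_facts p hp).1, p+5, by linarith, fun δ hδ d _ P Q => ?_⟩
  have hM : (Smap p δ P - Smap p δ Q)ᵀ = Smap p δ P - Smap p δ Q := by
    unfold Smap
    rw [Matrix.transpose_sub, Matrix.transpose_smul, Matrix.transpose_smul,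
      msym_transpose, msym_transpose]
  have hexp : mdot (Smap p δ P - Smap p δ Q) (P - Q)
      = (δ + mnorm (msym P))^(p-2) * (mnorm (msym P))^2
        + (δ + mnorm (msym Q))^(p-2) * (mnorm (msym Q))^2
        - ((δ + mnorm (msym P))^(p-2) + (δ + mnorm (msym Q))^(p-2))
            * mdot (msym P) (msym Q) := by
    rw [mdot_msym_right _ _ hM, msym_sub, mnorm_sq, mnorm_sq]
    unfold Smap
    exact mdot_lin _ _ _ _
  have hnorm : mnorm (msym P - msym Q)^2
      = (mnorm (msym P))^2 + (mnorm (msym Q))^2 - 2 * mdot (msym P) (msym Q) := by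
    rw [mnorm_sq, mnorm_sq, mnorm_sq]
    exact mdot_sub_self _ _
  have hcs := mdot_cauchy (msym P) (msym Q)
  obtain ⟨hlow, hup⟩ := core_scalar p δ (mnorm (msym P)) (mnorm (msym Q))
    (mdot (msym P) (msym Q)) hp hδ (mnorm_nonneg' _) (mnorm_nonneg' _)
    (abs_le.mp hcs).2 (abs_le.mp hcs).1
  rw [hexp, hnorm]
  exact ⟨hlow, hup⟩
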